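/- Let 𝒳, 𝒜 be nonempty finite types, p_X a strictly positive probability mass function on 𝒳, ℓ : 𝒳 × 𝒜 → ℝ a nonnegative loss function, β > 0, q a strictly positive probability mass function on 𝒜, and f : (0, ∞) → ℝ a differentiable convex function with f(1) = 0. If p* is a strictly positive channel from 𝒳 to 𝒜 minimizing p ↦ Σ_{x,a} p_X(x) p(a|x) ℓ(x,a) + β Σ_{x,a} p_X(x) q(a) f(p(a|x)/q(a)) over strictly positive channels, then for every x ∈ 𝒳 there exists λ_x ∈ ℝ such that for every a ∈ 𝒜: ℓ(x,a) + β f'(p*(a|x)/q(a)) + λ_x = 0. -/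

import Mathlib

open Finset Real

/-- A probability mass function on a finite type. -/
def IsPMF {Z : Type*} [Fintype Z] (p : Z → ℝ) : Prop :=
  (∀ z, 0 ≤ p z) ∧ ∑ z, p z = 1

/-- A channel from `X` to `A`: a family of pmfs on `A` indexed by `X`. -/
def IsChannel {X A : Type*} [Fintype X] [Fintype A] (W : X → A → ℝ) : Prop :=
  ∀ x, IsPMF (W x)

/-- Expected loss `Σ_{x,a} p_X(x) p_{A|X}(a|x) ℓ(x,a)`. -/
noncomputable def expLoss {X A : Type*} [Fintype X] [Fintype A]
    (pX : X → ℝ) (ℓ : X → A → ℝ) (W : X → A → ℝ) : ℝ :=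
  ∑ x, ∑ a, pX x * W x a * ℓ x a

lemma sum_sub_eq_single {ι : Type*} [Fintype ι] [DecidableEq ι] (g h : ι → ℝ) (i₀ : ι)
    (hgh : ∀ i, i ≠ i₀ → g i = h i) :
    (∑ i, g i) - (∑ i, h i) = g i₀ - h i₀ := by
  rw [← Finset.add_sum_erase _ g (Finset.mem_univ i₀),
      ← Finset.add_sum_erase _ h (Finset.mem_univ i₀),
      Finset.sum_congr rfl (fun i hi => hgh i (Finset.ne_of_mem_erase hi))]
  ring

lemma sum_sub_eq_pair {ι : Type*} [Fintype ι] [DecidableEq ι] (g h : ι → ℝ) (a b : ι)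
    (hab : a ≠ b) (hgh : ∀ i, i ≠ a → i ≠ b → g i = h i) :
    (∑ i, g i) - (∑ i, h i) = (g a - h a) + (g b - h b) := by
  have hb : b ∈ univ.erase a := Finset.mem_erase.mpr ⟨hab.symm, Finset.mem_univ b⟩
  rw [← Finset.add_sum_erase _ g (Finset.mem_univ a),
      ← Finset.add_sum_erase _ h (Finset.mem_univ a),
      ← Finset.add_sum_erase _ g hb, ← Finset.add_sum_erase _ h hb,
      Finset.sum_congr rfl (fun i hi => hgh i (Finset.ne_of_mem_erase (Finset.mem_of_mem_erase hi))
        (Finset.ne_of_mem_erase hi))]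
  ring

theorem f_objective_channel_minimizer_KKT
    {X A : Type*} [Fintype X] [Fintype A] [Nonempty X] [Nonempty A]
    (pX : X → ℝ) (hpX : IsPMF pX) (hpXpos : ∀ x, 0 < pX x)
    (ℓ : X → A → ℝ) (hℓ : ∀ x a, 0 ≤ ℓ x a)
    (β : ℝ) (hβ : 0 < β)
    (q : A → ℝ) (hq : IsPMF q) (hqpos : ∀ a, 0 < q a)
    (f f' : ℝ → ℝ)
    (hfconv : ConvexOn ℝ (Set.Ioi (0 : ℝ)) f)
    (hfderiv : ∀ t : ℝ, 0 < t → HasDerivAt f (f' t) t)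
    (hf1 : f 1 = 0)
    (pstar : X → A → ℝ) (hpstar : IsChannel pstar) (hpstarpos : ∀ x a, 0 < pstar x a)
    (hmin : ∀ p : X → A → ℝ, IsChannel p → (∀ x a, 0 < p x a) →
      (∑ x, ∑ a, pX x * pstar x a * ℓ x a)
          + β * ∑ x, ∑ a, pX x * q a * f (pstar x a / q a)
        ≤ (∑ x, ∑ a, pX x * p x a * ℓ x a)
          + β * ∑ x, ∑ a, pX x * q a * f (p x a / q a)) :
    ∀ x : X, ∃ lam : ℝ, ∀ a : A,
      ℓ x a + β * f' (pstar x a / q a) + lam = 0 := by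
  classical
  intro x₀
  -- the key constancy claim
  have hconst : ∀ a b : A, ℓ x₀ a + β * f' (pstar x₀ a / q a)
      = ℓ x₀ b + β * f' (pstar x₀ b / q b) := by
    intro a b
    rcases eq_or_ne a b with rfl | hab
    · rfl
    set pa := pstar x₀ a with hpa_def
    set pb := pstar x₀ b with hpb_def
    set ε : ℝ := min pa pb with hε_def
    have hεpos : 0 < ε := lt_min (hpstarpos x₀ a) (hpstarpos x₀ b)
    have hεa : ε ≤ pa := min_le_left _ _
    have hεb : ε ≤ pb := min_le_right _ _
    set g : ℝ → ℝ := fun t =>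
      pX x₀ * (pa + t) * ℓ x₀ a + pX x₀ * (pb - t) * ℓ x₀ b
        + β * (pX x₀ * q a * f ((pa + t) / q a) + pX x₀ * q b * f ((pb - t) / q b))
      with hg_def
    -- local min of g at 0
    have hkey : ∀ t : ℝ, -ε < t → t < ε → g 0 ≤ g t := by
      intro t ht1 ht2
      set w : A → ℝ := fun a' => if a' = a then pa + t else if a' = b then pb - t else pstar x₀ a'
        with hw_def
      set W : X → A → ℝ := fun x => if x = x₀ then w else pstar x with hW_def
      have hwa : w a = pa + t := by simp [hw_def]
      have hwb : w b = pb - t := by simp [hw_def, hab.symm]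
      have hWx₀ : W x₀ = w := by simp [hW_def]
      have hWne : ∀ x, x ≠ x₀ → W x = pstar x := by intro x hx; simp [hW_def, hx]
      have hwpos : ∀ a', 0 < w a' := by
        intro a'
        by_cases h1 : a' = a
        · rw [h1, hwa]; linarith
        · by_cases h2 : a' = b
          · rw [h2, hwb]; linarith
          · simp only [hw_def, h1, h2, if_false]; exact hpstarpos x₀ a'
      have hWpos : ∀ x a', 0 < W x a' := by
        intro x a'
        by_cases hx : x = x₀
        · rw [hx, hWx₀]; exact hwpos a'
        · rw [hWne x hx]; exact hpstarpos x a'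
      have hWchan : IsChannel W := by
        intro x
        by_cases hx : x = x₀
        · rw [hx, hWx₀]
          refine ⟨fun a' => (hwpos a').le, ?_⟩
          have hdiff : (∑ a', w a') - (∑ a', pstar x₀ a') = (w a - pa) + (w b - pb) :=
            sum_sub_eq_pair _ _ a b hab (fun i h1 h2 => by simp [hw_def, h1, h2])
          rw [hwa, hwb] at hdiff
          have := (hpstar x₀).2
          linarith [hdiff]
        · rw [hWne x hx]; exact hpstar x
      have hmin' := hmin W hWchan hWpos
      -- first sum difference
      have hS1 : (∑ x, ∑ a', pX x * W x a' * ℓ x a')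
          - (∑ x, ∑ a', pX x * pstar x a' * ℓ x a')
          = (pX x₀ * (pa + t) * ℓ x₀ a - pX x₀ * pa * ℓ x₀ a)
            + (pX x₀ * (pb - t) * ℓ x₀ b - pX x₀ * pb * ℓ x₀ b) := by
        have h1 := sum_sub_eq_single (fun x => ∑ a', pX x * W x a' * ℓ x a')
          (fun x => ∑ a', pX x * pstar x a' * ℓ x a') x₀
          (fun x hx => by simp only [hWne x hx])
        have h2 := sum_sub_eq_pair (fun a' => pX x₀ * W x₀ a' * ℓ x₀ a')
          (fun a' => pX x₀ * pstar x₀ a' * ℓ x₀ a') a b hab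
          (fun i hia hib => by simp only [hWx₀]; simp [hw_def, hia, hib])
        simp only [hWx₀, hwa, hwb] at h1 h2
        rw [h1, h2]
      have hS2 : (∑ x, ∑ a', pX x * q a' * f (W x a' / q a'))
          - (∑ x, ∑ a', pX x * q a' * f (pstar x a' / q a'))
          = (pX x₀ * q a * f ((pa + t) / q a) - pX x₀ * q a * f (pa / q a))
            + (pX x₀ * q b * f ((pb - t) / q b) - pX x₀ * q b * f (pb / q b)) := by
        have h1 := sum_sub_eq_single (fun x => ∑ a', pX x * q a' * f (W x a' / q a'))
          (fun x => ∑ a', pX x * q a' * f (pstar x a' / q a')) x₀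
          (fun x hx => by simp only [hWne x hx])
        have h2 := sum_sub_eq_pair (fun a' => pX x₀ * q a' * f (W x₀ a' / q a'))
          (fun a' => pX x₀ * q a' * f (pstar x₀ a' / q a')) a b hab
          (fun i hia hib => by simp only [hWx₀]; simp [hw_def, hia, hib])
        simp only [hWx₀, hwa, hwb] at h1 h2
        rw [h1, h2]
      have hS2' : β * (∑ x, ∑ a', pX x * q a' * f (W x a' / q a'))
          - β * (∑ x, ∑ a', pX x * q a' * f (pstar x a' / q a'))
          = β * ((pX x₀ * q a * f ((pa + t) / q a) - pX x₀ * q a * f (pa / q a))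
            + (pX x₀ * q b * f ((pb - t) / q b) - pX x₀ * q b * f (pb / q b))) := by
        rw [← mul_sub, hS2]
      simp only [hg_def, add_zero, sub_zero]
      linarith [hmin', hS1, hS2']
    have hlocal : IsLocalMin g 0 := by
      have hmem : Set.Ioo (-ε) ε ∈ nhds (0 : ℝ) := Ioo_mem_nhds (by linarith) hεpos
      filter_upwards [hmem] with t ht
      exact hkey t ht.1 ht.2
    -- derivative of g at 0
    have hqa := hqpos a
    have hqb := hqpos b
    have hA : HasDerivAt (fun t : ℝ => (pa + t) / q a) (1 / q a) 0 := by
      simpa using ((hasDerivAt_id (0 : ℝ)).const_add pa).div_const (q a)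
    have hB : HasDerivAt (fun t : ℝ => (pb - t) / q b) (-1 / q b) 0 := by
      simpa [neg_div] using ((hasDerivAt_id (0 : ℝ)).const_sub pb).div_const (q b)
    have hpa0 : (0 : ℝ) < (pa + 0) / q a := by
      have := hpstarpos x₀ a; rw [add_zero]; positivity
    have hpb0 : (0 : ℝ) < (pb - 0) / q b := by
      have := hpstarpos x₀ b; rw [sub_zero]; positivity
    have hfa : HasDerivAt (fun t : ℝ => f ((pa + t) / q a)) (f' (pa / q a) * (1 / q a)) 0 := by
      have h := (hfderiv _ hpa0).comp 0 hA
      simpa [Function.comp_def] using h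
    have hfb : HasDerivAt (fun t : ℝ => f ((pb - t) / q b)) (f' (pb / q b) * (-1 / q b)) 0 := by
      have h := (hfderiv _ hpb0).comp 0 hB
      simpa [Function.comp_def] using h
    have h1 : HasDerivAt (fun t : ℝ => pX x₀ * (pa + t) * ℓ x₀ a) (pX x₀ * ℓ x₀ a) 0 := by
      simpa using (((hasDerivAt_id (0 : ℝ)).const_add pa).const_mul (pX x₀)).mul_const (ℓ x₀ a)
    have h2 : HasDerivAt (fun t : ℝ => pX x₀ * (pb - t) * ℓ x₀ b) (-(pX x₀ * ℓ x₀ b)) 0 := by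
      simpa using (((hasDerivAt_id (0 : ℝ)).const_sub pb).const_mul (pX x₀)).mul_const (ℓ x₀ b)
    have h3 := (((hfa.const_mul (pX x₀ * q a)).add (hfb.const_mul (pX x₀ * q b))).const_mul β)
    have hg : HasDerivAt g
        (pX x₀ * ℓ x₀ a + -(pX x₀ * ℓ x₀ b)
          + β * (pX x₀ * q a * (f' (pa / q a) * (1 / q a))
            + pX x₀ * q b * (f' (pb / q b) * (-1 / q b)))) 0 := by
      rw [hg_def]
      exact (h1.add h2).add h3
    have hpx := hpXpos x₀
    have hqa' : q a ≠ 0 := ne_of_gt hqa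
    have hqb' : q b ≠ 0 := ne_of_gt hqb
    have hpx' : pX x₀ ≠ 0 := ne_of_gt hpx
    have hg' : HasDerivAt g
        (pX x₀ * ℓ x₀ a - pX x₀ * ℓ x₀ b
          + β * (pX x₀ * f' (pa / q a) - pX x₀ * f' (pb / q b))) 0 := by
      convert hg using 1
      field_simp
      ring
    have hzero := hlocal.hasDerivAt_eq_zero hg'
    apply mul_left_cancel₀ hpx'
    linear_combination hzero
  obtain ⟨a₀⟩ := ‹Nonempty A›
  exact ⟨-(ℓ x₀ a₀ + β * f' (pstar x₀ a₀ / q a₀)), fun a => by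
    have := hconst a a₀; linarith⟩
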